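/- Let L ≥ 2 and let h(ν) = ∑_{l=−(L−1)}^{L−1} h_l e^{−2πi l ν} be a trigonometric polynomial of degree at most L−1 whose values h(ν) are real for all ν ∈ [0,1]. Let δ > 0, let K be an integer with K ≥ 2(1+δ)(L−1), let ν_0 ∈ [0,1], and set ν_k = ν_0 + k/K for k = 0,…,K. Then max_{ν∈[0,1]} |h(ν)| ≤ (1 + 1/δ) · max_{k=0,…,K} |h(ν_k)|. -/

import Mathlib

open Complex Finset

noncomputable def Ee (l : ℤ) (x : ℝ) : ℂ :=
  Complex.exp (-(2 * (Real.pi : ℂ) * Complex.I * (l : ℂ) * (x : ℂ)))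

lemma Ee_zero (x : ℝ) : Ee 0 x = 1 := by simp [Ee]

lemma Ee_add_freq (l t : ℤ) (x : ℝ) : Ee (l + t) x = Ee l x * Ee t x := by
  rw [Ee, Ee, Ee, ← Complex.exp_add]; congr 1; push_cast; ring

lemma Ee_add_arg (l : ℤ) (x y : ℝ) : Ee l (x + y) = Ee l x * Ee l y := by
  rw [Ee, Ee, Ee, ← Complex.exp_add]; congr 1; push_cast; ring

lemma Ee_conj (l : ℤ) (x : ℝ) : (starRingEnd ℂ) (Ee l x) = Ee (-l) x := by
  rw [Ee, ← Complex.exp_conj]; congr 1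
  simp only [map_neg, map_mul, Complex.conj_I, Complex.conj_ofReal, map_intCast, map_ofNat]
  push_cast; ring

lemma Ee_neg_arg (l : ℤ) (x : ℝ) : Ee l (-x) = Ee (-l) x := by
  rw [Ee, Ee]; congr 1; push_cast; ring

lemma Ee_abs (l : ℤ) (x : ℝ) : ‖Ee l x‖ = 1 := by
  rw [Ee, Complex.norm_exp]
  have : (-(2 * (Real.pi : ℂ) * Complex.I * (l : ℂ) * (x : ℂ))).re = 0 := by
    simp [Complex.mul_re, Complex.mul_im]
  rw [this, Real.exp_zero]


lemma Ee_sum_zero (K : ℕ) (t : ℤ) (ht : t ≠ 0) (hlt : |t| < (K : ℤ)) :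
    ∑ k ∈ range K, Ee t ((k : ℝ) / K) = 0 := by
  have hK : 0 < K := by
    by_contra hc
    push_neg at hc
    have : K = 0 := by omega
    subst this
    simp only [Nat.cast_zero] at hlt
    have := abs_nonneg t
    omega
  set ζ : ℂ := Ee t (1 / K) with hζ
  have hk : ∀ k : ℕ, Ee t ((k : ℝ) / K) = ζ ^ k := by
    intro k
    rw [hζ, Ee, Ee, ← Complex.exp_nat_mul]
    congr 1
    push_cast
    have : (K : ℂ) ≠ 0 := by exact_mod_cast hK.ne'
    field_simp
  have hζK : ζ ^ K = 1 := by
    rw [hζ, Ee, ← Complex.exp_nat_mul]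
    have : (K : ℂ) * -(2 * (Real.pi : ℂ) * Complex.I * (t : ℂ) * ((1 : ℝ) / K : ℝ)) =
        (-t : ℤ) * (2 * Real.pi * Complex.I) := by
      have : (K : ℂ) ≠ 0 := by exact_mod_cast hK.ne'
      push_cast
      field_simp
    rw [this, Complex.exp_int_mul_two_pi_mul_I]
  have hζ1 : ζ ≠ 1 := by
    intro hc
    rw [hζ, Ee, Complex.exp_eq_one_iff] at hc
    obtain ⟨m, hm⟩ := hc
    have hKc : (K : ℂ) ≠ 0 := by exact_mod_cast hK.ne'
    have hπ : (Real.pi : ℂ) ≠ 0 := by exact_mod_cast Real.pi_ne_zero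
    have : ((t : ℂ) + m * K) * (2 * Real.pi * Complex.I) = 0 := by
      push_cast at hm ⊢
      field_simp at hm
      linear_combination (-(2 * (Real.pi : ℂ) * Complex.I)) * hm
    have h2 : (t : ℂ) + m * K = 0 := by
      rcases mul_eq_zero.mp this with h | h
      · exact h
      · exfalso
        have := Complex.I_ne_zero
        simp [Complex.I_ne_zero, hπ] at h
    have h3 : t + m * K = 0 := by exact_mod_cast h2
    have : (K : ℤ) ∣ t := ⟨-m, by linarith⟩
    have h4 := Int.le_of_dvd (abs_pos.mpr ht) ((dvd_abs _ _).mpr this)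
    omega
  calc ∑ k ∈ range K, Ee t ((k : ℝ) / K) = ∑ k ∈ range K, ζ ^ k := by
        exact Finset.sum_congr rfl fun k _ => hk k
    _ = (ζ ^ K - 1) / (ζ - 1) := geom_sum_eq hζ1 K
    _ = 0 := by rw [hζK]; simp



lemma reindex1 (j : ℕ) (x : ℝ) :
    ∑ s ∈ range j, Ee ((s : ℤ) - j) x = ∑ t ∈ Icc (-(j : ℤ)) (-1), Ee t x := by
  refine Finset.sum_nbij' (i := fun s => (s : ℤ) - j) (j := fun t => (t + j).toNat) ?_ ?_ ?_ ?_ ?_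
  · intro s hs; simp only [mem_range] at hs; simp only [mem_Icc]; omega
  · intro t ht; simp only [mem_Icc] at ht; simp only [mem_range]; omega
  · intro s hs; simp only [mem_range] at hs; simp; try omega
  · intro t ht; simp only [mem_Icc] at ht; simp; try omega
  · intro s hs; rfl

lemma reindex2 (j : ℕ) (x : ℝ) :
    ∑ s ∈ range j, Ee ((j : ℤ) - s) x = ∑ t ∈ Icc (1 : ℤ) j, Ee t x := by
  refine Finset.sum_nbij' (i := fun s => (j : ℤ) - s) (j := fun t => ((j : ℤ) - t).toNat) ?_ ?_ ?_ ?_ ?_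
  · intro s hs; simp only [mem_range] at hs; simp only [mem_Icc]; omega
  · intro t ht; simp only [mem_Icc] at ht; simp only [mem_range]; omega
  · intro s hs; simp only [mem_range] at hs; simp; try omega
  · intro t ht; simp only [mem_Icc] at ht; simp; try omega
  · intro s hs; rfl

lemma dirichlet_split (j : ℕ) (x : ℝ) :
    ∑ t ∈ Icc (-(j : ℤ)) j, Ee t x =
      (∑ s ∈ range j, Ee ((s : ℤ) - j) x) + (∑ s ∈ range j, Ee ((j : ℤ) - s) x) + 1 := by
  rw [reindex1, reindex2]
  have h1 : Icc (-(j : ℤ)) j = (Icc (-(j : ℤ)) (-1)) ∪ (Icc (0 : ℤ) j) := by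
    ext t; simp only [mem_Icc, mem_union]; omega
  have h2 : Disjoint (Icc (-(j : ℤ)) (-1)) (Icc (0 : ℤ) j) := by
    rw [Finset.disjoint_left]; intro t h1 h2
    simp only [mem_Icc] at h1 h2; omega
  have h3 : Icc (0 : ℤ) j = insert (0 : ℤ) (Icc (1 : ℤ) j) := by
    ext t; simp only [mem_Icc, mem_insert]; omega
  rw [h1, Finset.sum_union h2, h3, Finset.sum_insert (by simp), Ee_zero]
  ring

lemma fejer (j : ℕ) (x : ℝ) :
    (∑ s ∈ range j, Ee s x) * (starRingEnd ℂ) (∑ s ∈ range j, Ee s x)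
      = ∑ t ∈ Icc (-(j : ℤ)) j, ((max ((j : ℤ) - |t|) 0 : ℤ) : ℂ) * Ee t x := by
  induction j with
  | zero => simp
  | succ j ih =>
    rw [Finset.sum_range_succ, map_add, Ee_conj]
    have expand : (∑ s ∈ range j, Ee s x + Ee j x) *
        ((starRingEnd ℂ) (∑ s ∈ range j, Ee s x) + Ee (-(j : ℤ)) x)
      = (∑ s ∈ range j, Ee s x) * (starRingEnd ℂ) (∑ s ∈ range j, Ee s x)
        + (∑ s ∈ range j, Ee s x) * Ee (-(j : ℤ)) x
        + Ee j x * (starRingEnd ℂ) (∑ s ∈ range j, Ee s x)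
        + Ee j x * Ee (-(j : ℤ)) x := by ring
    rw [expand, ih]
    have e1 : (∑ s ∈ range j, Ee s x) * Ee (-(j : ℤ)) x
        = ∑ s ∈ range j, Ee ((s : ℤ) - j) x := by
      rw [Finset.sum_mul]
      exact Finset.sum_congr rfl fun s _ => by rw [sub_eq_add_neg, Ee_add_freq]
    have e2 : Ee j x * (starRingEnd ℂ) (∑ s ∈ range j, Ee s x)
        = ∑ s ∈ range j, Ee ((j : ℤ) - s) x := by
      rw [map_sum, Finset.mul_sum]
      exact Finset.sum_congr rfl fun s _ => by
        rw [Ee_conj, sub_eq_add_neg, Ee_add_freq]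
    have e3 : Ee j x * Ee (-(j : ℤ)) x = 1 := by
      rw [← Ee_add_freq]; simp [Ee_zero]
    rw [e1, e2, e3]
    have rhs1 : ∑ t ∈ Icc (-((j : ℤ) + 1)) ((j : ℤ) + 1),
          ((max (((j : ℤ) + 1) - |t|) 0 : ℤ) : ℂ) * Ee t x
        = ∑ t ∈ Icc (-(j : ℤ)) j, ((max (((j : ℤ) + 1) - |t|) 0 : ℤ) : ℂ) * Ee t x := by
      symm
      apply Finset.sum_subset
      · intro t ht; simp only [mem_Icc] at *; omega
      · intro t ht ht'
        simp only [mem_Icc] at ht ht'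
        have : max (((j : ℤ) + 1) - |t|) 0 = 0 := by
          rcases abs_cases t with ⟨h1, h2⟩ | ⟨h1, h2⟩ <;> omega
        rw [this]; simp
    have cast1 : -(((j : ℕ) + 1 : ℕ) : ℤ) = -((j : ℤ) + 1) := by push_cast; ring
    have cast2 : ((((j : ℕ) + 1 : ℕ)) : ℤ) = (j : ℤ) + 1 := by push_cast; ring
    rw [cast1, cast2, rhs1]
    have split : ∑ t ∈ Icc (-(j : ℤ)) j, ((max (((j : ℤ) + 1) - |t|) 0 : ℤ) : ℂ) * Ee t x
        = (∑ t ∈ Icc (-(j : ℤ)) j, ((max ((j : ℤ) - |t|) 0 : ℤ) : ℂ) * Ee t x)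
          + ∑ t ∈ Icc (-(j : ℤ)) j, Ee t x := by
      rw [← Finset.sum_add_distrib]
      apply Finset.sum_congr rfl
      intro t ht
      simp only [mem_Icc] at ht
      have hcoef : (max (((j : ℤ) + 1) - |t|) 0 : ℤ) = max ((j : ℤ) - |t|) 0 + 1 := by
        rcases abs_cases t with ⟨h1, h2⟩ | ⟨h1, h2⟩ <;> omega
      rw [hcoef]
      push_cast
      ring
    rw [split, dirichlet_split]
    ring


lemma Ee_sum_ite_d (K : ℕ) (hK : 0 < K) (t : ℤ) (hlt : |t| < (K : ℤ)) :
    ∑ k ∈ range K, Ee t ((k : ℝ) / K) = if t = 0 then (K : ℂ) else 0 := by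
  by_cases ht : t = 0
  · subst ht; simp [Ee_zero]
  · rw [if_neg ht]; exact Ee_sum_zero K t ht hlt

lemma Ee_sub_arg_d (t : ℤ) (y u : ℝ) : Ee t (y - u) = Ee t y * Ee (-t) u := by
  rw [sub_eq_add_neg, Ee_add_arg, Ee_neg_arg]

lemma sampled_fejer (K : ℕ) (hK : 0 < K) (j : ℕ) (hj : j ≤ K) (y : ℝ) :
    ∑ k ∈ range K, (∑ s ∈ range j, Ee s (y - (k : ℝ) / K)) *
        (starRingEnd ℂ) (∑ s ∈ range j, Ee s (y - (k : ℝ) / K)) = (j : ℂ) * K := by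
  have step2 : ∀ k : ℕ, (∑ s ∈ range j, Ee s (y - (k : ℝ) / K)) *
      (starRingEnd ℂ) (∑ s ∈ range j, Ee s (y - (k : ℝ) / K))
      = ∑ s ∈ range j, ∑ s' ∈ range j, Ee ((s : ℤ) - s') y * Ee ((s' : ℤ) - s) ((k : ℝ) / K) := by
    intro k
    rw [map_sum, Finset.sum_mul_sum]
    apply Finset.sum_congr rfl; intro s _
    apply Finset.sum_congr rfl; intro s' _
    rw [Ee_conj, ← Ee_add_freq]
    have : (s : ℤ) + -(s' : ℤ) = (s : ℤ) - s' := by ring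
    rw [this, Ee_sub_arg_d]
    congr 1
    congr 1
    ring
  calc ∑ k ∈ range K, (∑ s ∈ range j, Ee s (y - (k : ℝ) / K)) *
        (starRingEnd ℂ) (∑ s ∈ range j, Ee s (y - (k : ℝ) / K))
      = ∑ k ∈ range K, ∑ s ∈ range j, ∑ s' ∈ range j,
          Ee ((s : ℤ) - s') y * Ee ((s' : ℤ) - s) ((k : ℝ) / K) := by
        exact Finset.sum_congr rfl fun k _ => step2 k
    _ = ∑ s ∈ range j, ∑ s' ∈ range j,
          Ee ((s : ℤ) - s') y * ∑ k ∈ range K, Ee ((s' : ℤ) - s) ((k : ℝ) / K) := by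
        rw [Finset.sum_comm]
        apply Finset.sum_congr rfl; intro s _
        rw [Finset.sum_comm]
        apply Finset.sum_congr rfl; intro s' _
        rw [Finset.mul_sum]
    _ = ∑ s ∈ range j, ∑ s' ∈ range j, (if s' = s then (K : ℂ) else 0) := by
        apply Finset.sum_congr rfl; intro s hs
        apply Finset.sum_congr rfl; intro s' hs'
        simp only [mem_range] at hs hs'
        rw [Ee_sum_ite_d K hK _ (by rcases abs_cases ((s' : ℤ) - s) with ⟨h1,h2⟩|⟨h1,h2⟩ <;> omega)]
        by_cases h : s' = s
        · subst h; simp [Ee_zero]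
        · have : ((s' : ℤ) - s) ≠ 0 := by omega
          simp [h, this]
    _ = ∑ s ∈ range j, (K : ℂ) := by
        apply Finset.sum_congr rfl; intro s hs
        rw [Finset.sum_ite_eq' (range j) s (fun _ => (K : ℂ))]
        simp [hs]
    _ = (j : ℂ) * K := by simp [mul_comm]


lemma Ee_sum_ite (K : ℕ) (t : ℤ) (hlt : |t| < (K : ℤ)) :
    ∑ k ∈ range K, Ee t ((k : ℝ) / K) = if t = 0 then (K : ℂ) else 0 := by
  by_cases ht : t = 0
  · subst ht; simp [Ee_zero]
  · rw [if_neg ht]; exact Ee_sum_zero K t ht hlt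

lemma Ee_sub_arg (t : ℤ) (y u : ℝ) : Ee t (y - u) = Ee t y * Ee (-t) u := by
  rw [sub_eq_add_neg, Ee_add_arg, Ee_neg_arg]

lemma Ee_mul_neg_self (l : ℤ) (x : ℝ) : Ee l x * Ee (-l) x = 1 := by
  rw [← Ee_add_freq]; simp [Ee_zero]

lemma interpolation (n P K : ℕ) (hPK : P + n = K) (hnP : n < P) (c : ℤ → ℂ) (ν ν₀ : ℝ) :
    ∑ k ∈ range K, ((∑ l ∈ Icc (-(n : ℤ)) n, c l * Ee l (ν₀ + (k : ℝ) / K)) *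
        (∑ t ∈ Icc (-(P : ℤ)) P,
          ((max ((P : ℤ) - |t|) 0 - max ((n : ℤ) - |t|) 0 : ℤ) : ℂ) *
            Ee t (ν - (ν₀ + (k : ℝ) / K))))
      = ((P : ℂ) - n) * K * ∑ l ∈ Icc (-(n : ℤ)) n, c l * Ee l ν := by
  have hKpos : 0 < K := by omega
  -- rewrite each k-summand as a double sum
  have step1 : ∀ k : ℕ, ((∑ l ∈ Icc (-(n : ℤ)) n, c l * Ee l (ν₀ + (k : ℝ) / K)) *
      (∑ t ∈ Icc (-(P : ℤ)) P,
          ((max ((P : ℤ) - |t|) 0 - max ((n : ℤ) - |t|) 0 : ℤ) : ℂ) *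
            Ee t (ν - (ν₀ + (k : ℝ) / K))))
      = ∑ l ∈ Icc (-(n : ℤ)) n, ∑ t ∈ Icc (-(P : ℤ)) P,
          (c l * ((max ((P : ℤ) - |t|) 0 - max ((n : ℤ) - |t|) 0 : ℤ) : ℂ) *
            (Ee l ν₀ * Ee t ν * Ee (-t) ν₀)) * Ee (l - t) ((k : ℝ) / K) := by
    intro k
    rw [Finset.sum_mul_sum]
    apply Finset.sum_congr rfl; intro l _
    apply Finset.sum_congr rfl; intro t _
    have e1 : Ee l (ν₀ + (k : ℝ) / K) = Ee l ν₀ * Ee l ((k : ℝ) / K) := Ee_add_arg _ _ _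
    have e2 : Ee t (ν - (ν₀ + (k : ℝ) / K)) = Ee t ν * Ee (-t) ν₀ * Ee (-t) ((k : ℝ) / K) := by
      have : ν - (ν₀ + (k : ℝ) / K) = (ν - ν₀) - (k : ℝ) / K := by ring
      rw [this, Ee_sub_arg, Ee_sub_arg]; try ring
    have e3 : Ee l ((k : ℝ) / K) * Ee (-t) ((k : ℝ) / K) = Ee (l - t) ((k : ℝ) / K) := by
      rw [← Ee_add_freq, sub_eq_add_neg]
    rw [e1, e2]
    calc c l * (Ee l ν₀ * Ee l ((k : ℝ) / K)) *
          (((max ((P : ℤ) - |t|) 0 - max ((n : ℤ) - |t|) 0 : ℤ) : ℂ) *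
            (Ee t ν * Ee (-t) ν₀ * Ee (-t) ((k : ℝ) / K)))
        = (c l * ((max ((P : ℤ) - |t|) 0 - max ((n : ℤ) - |t|) 0 : ℤ) : ℂ) *
            (Ee l ν₀ * Ee t ν * Ee (-t) ν₀)) *
            (Ee l ((k : ℝ) / K) * Ee (-t) ((k : ℝ) / K)) := by ring
      _ = _ := by rw [e3]
  calc ∑ k ∈ range K, ((∑ l ∈ Icc (-(n : ℤ)) n, c l * Ee l (ν₀ + (k : ℝ) / K)) *
        (∑ t ∈ Icc (-(P : ℤ)) P,
          ((max ((P : ℤ) - |t|) 0 - max ((n : ℤ) - |t|) 0 : ℤ) : ℂ) *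
            Ee t (ν - (ν₀ + (k : ℝ) / K))))
      = ∑ k ∈ range K, ∑ l ∈ Icc (-(n : ℤ)) n, ∑ t ∈ Icc (-(P : ℤ)) P,
          (c l * ((max ((P : ℤ) - |t|) 0 - max ((n : ℤ) - |t|) 0 : ℤ) : ℂ) *
            (Ee l ν₀ * Ee t ν * Ee (-t) ν₀)) * Ee (l - t) ((k : ℝ) / K) :=
        Finset.sum_congr rfl fun k _ => step1 k
    _ = ∑ l ∈ Icc (-(n : ℤ)) n, ∑ t ∈ Icc (-(P : ℤ)) P,
          (c l * ((max ((P : ℤ) - |t|) 0 - max ((n : ℤ) - |t|) 0 : ℤ) : ℂ) *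
            (Ee l ν₀ * Ee t ν * Ee (-t) ν₀)) * ∑ k ∈ range K, Ee (l - t) ((k : ℝ) / K) := by
        rw [Finset.sum_comm]
        apply Finset.sum_congr rfl; intro l _
        rw [Finset.sum_comm]
        apply Finset.sum_congr rfl; intro t _
        rw [Finset.mul_sum]
    _ = ∑ l ∈ Icc (-(n : ℤ)) n, ((P : ℂ) - n) * K * (c l * Ee l ν) := by
        apply Finset.sum_congr rfl; intro l hl
        simp only [mem_Icc] at hl
        rw [Finset.sum_eq_single l]
        · -- diagonal term
          have hb : (max ((P : ℤ) - |l|) 0 - max ((n : ℤ) - |l|) 0 : ℤ) = (P : ℤ) - n := by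
            rcases abs_cases l with ⟨h1, h2⟩ | ⟨h1, h2⟩ <;> omega
          have hs : ∑ k ∈ range K, Ee (l - l) ((k : ℝ) / K) = (K : ℂ) := by
            simp [sub_self, Ee_zero]
          rw [hs, hb]
          have : Ee l ν₀ * Ee l ν * Ee (-l) ν₀ = Ee l ν := by
            calc Ee l ν₀ * Ee l ν * Ee (-l) ν₀ = (Ee l ν₀ * Ee (-l) ν₀) * Ee l ν := by ring
              _ = Ee l ν := by rw [Ee_mul_neg_self]; ring
          rw [this]
          push_cast
          ring
        · -- off-diagonal terms vanish
          intro t ht hne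
          simp only [mem_Icc] at ht
          by_cases habs : |l - t| < (K : ℤ)
          · rw [Ee_sum_ite K _ habs, if_neg (by omega)]
            ring
          · have hb0 : (max ((P : ℤ) - |t|) 0 - max ((n : ℤ) - |t|) 0 : ℤ) = 0 := by
              rcases abs_cases (l - t) with ⟨h1, h2⟩ | ⟨h1, h2⟩ <;>
                rcases abs_cases t with ⟨h3, h4⟩ | ⟨h3, h4⟩ <;>
                rcases abs_cases l with ⟨h5, h6⟩ | ⟨h5, h6⟩ <;> omega
            rw [hb0]
            simp
        · intro hli
          exfalso
          simp only [mem_Icc] at hli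
          omega
    _ = ((P : ℂ) - n) * K * ∑ l ∈ Icc (-(n : ℤ)) n, c l * Ee l ν := by
        rw [Finset.mul_sum]

lemma sampled_fejer_real (K : ℕ) (hK : 0 < K) (j : ℕ) (hj : j ≤ K) (y : ℝ) :
    ∑ k ∈ range K, Complex.normSq (∑ s ∈ range j, Ee s (y - (k : ℝ) / K)) = (j : ℝ) * K := by
  have h1 := sampled_fejer K hK j hj y
  have h2 : ∑ k ∈ range K,
      ((Complex.normSq (∑ s ∈ range j, Ee s (y - (k : ℝ) / K)) : ℝ) : ℂ) = (j : ℂ) * K := by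
    rw [← h1]
    exact Finset.sum_congr rfl fun k _ => (Complex.mul_conj _).symm
  have h3 : ((∑ k ∈ range K,
      Complex.normSq (∑ s ∈ range j, Ee s (y - (k : ℝ) / K)) : ℝ) : ℂ) = ((j : ℝ) * K : ℝ) := by
    push_cast
    push_cast at h2
    exact h2
  exact_mod_cast h3

lemma V_abs_le (n P : ℕ) (hnP : n ≤ P) (x : ℝ) :
    ‖∑ t ∈ Icc (-(P : ℤ)) P,
        ((max ((P : ℤ) - |t|) 0 - max ((n : ℤ) - |t|) 0 : ℤ) : ℂ) * Ee t x‖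
      ≤ Complex.normSq (∑ s ∈ range P, Ee s x) + Complex.normSq (∑ s ∈ range n, Ee s x) := by
  have hext : ∑ t ∈ Icc (-(n : ℤ)) n, ((max ((n : ℤ) - |t|) 0 : ℤ) : ℂ) * Ee t x
      = ∑ t ∈ Icc (-(P : ℤ)) P, ((max ((n : ℤ) - |t|) 0 : ℤ) : ℂ) * Ee t x := by
    apply Finset.sum_subset
    · intro t ht; simp only [mem_Icc] at *; omega
    · intro t ht ht'
      simp only [mem_Icc] at ht ht'
      have : max ((n : ℤ) - |t|) 0 = 0 := by
        rcases abs_cases t with ⟨h1, h2⟩ | ⟨h1, h2⟩ <;> omega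
      rw [this]; simp
  have hV : (∑ t ∈ Icc (-(P : ℤ)) P,
        ((max ((P : ℤ) - |t|) 0 - max ((n : ℤ) - |t|) 0 : ℤ) : ℂ) * Ee t x)
      = (∑ s ∈ range P, Ee s x) * (starRingEnd ℂ) (∑ s ∈ range P, Ee s x)
        - (∑ s ∈ range n, Ee s x) * (starRingEnd ℂ) (∑ s ∈ range n, Ee s x) := by
    rw [fejer P x, fejer n x, hext, ← Finset.sum_sub_distrib]
    apply Finset.sum_congr rfl
    intro t _
    push_cast
    ring
  rw [hV]
  have hA : (∑ s ∈ range P, Ee s x) * (starRingEnd ℂ) (∑ s ∈ range P, Ee s x)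
      = ((Complex.normSq (∑ s ∈ range P, Ee s x) : ℝ) : ℂ) := Complex.mul_conj _
  have hB : (∑ s ∈ range n, Ee s x) * (starRingEnd ℂ) (∑ s ∈ range n, Ee s x)
      = ((Complex.normSq (∑ s ∈ range n, Ee s x) : ℝ) : ℂ) := Complex.mul_conj _
  rw [hA, hB]
  calc ‖((Complex.normSq (∑ s ∈ range P, Ee s x) : ℝ) : ℂ)
        - ((Complex.normSq (∑ s ∈ range n, Ee s x) : ℝ) : ℂ)‖
      ≤ ‖((Complex.normSq (∑ s ∈ range P, Ee s x) : ℝ) : ℂ)‖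
        + ‖((Complex.normSq (∑ s ∈ range n, Ee s x) : ℝ) : ℂ)‖ := by
        exact norm_sub_le _ _
    _ = Complex.normSq (∑ s ∈ range P, Ee s x) + Complex.normSq (∑ s ∈ range n, Ee s x) := by
        rw [Complex.norm_real, Complex.norm_real,
          Real.norm_of_nonneg (Complex.normSq_nonneg (∑ s ∈ range P, Ee s x)),
          Real.norm_of_nonneg (Complex.normSq_nonneg (∑ s ∈ range n, Ee s x))]

/-- Zygmund's grid inequality for real-valued trigonometric
polynomials of degree at most `L-1`. -/
theorem zygmund_grid_bound (L : ℕ) (hL : 2 ≤ L) (c : ℤ → ℂ) (h : ℝ → ℂ)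
    (hdef : ∀ ν : ℝ, h ν =
      ∑ l ∈ Finset.Icc (-(L : ℤ) + 1) ((L : ℤ) - 1),
        c l * Complex.exp (-(2 * (Real.pi : ℂ) * Complex.I * (l : ℂ) * (ν : ℂ))))
    (hreal : ∀ ν : ℝ, (h ν).im = 0)
    (δ : ℝ) (hδ : 0 < δ) (K : ℕ) (hK : 2 * (1 + δ) * ((L : ℝ) - 1) ≤ (K : ℝ))
    (ν₀ : ℝ) (hν₀ : ν₀ ∈ Set.Icc (0 : ℝ) 1) :
    ∀ ν ∈ Set.Icc (0 : ℝ) 1,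
      ‖h ν‖ ≤ (1 + 1 / δ) *
        (Finset.range (K + 1)).sup' ⟨0, Finset.mem_range.mpr (Nat.succ_pos K)⟩
          (fun k => ‖h (ν₀ + (k : ℝ) / (K : ℝ))‖) := by
  intro ν hν
  set M := (Finset.range (K + 1)).sup' ⟨0, Finset.mem_range.mpr (Nat.succ_pos K)⟩
    (fun k => ‖h (ν₀ + (k : ℝ) / (K : ℝ))‖) with hMdef
  set n : ℕ := L - 1 with hn
  have hLn : L = n + 1 := by omega
  have hn1 : 1 ≤ n := by omega
  have hnR : ((n : ℝ)) = (L : ℝ) - 1 := by rw [hLn]; push_cast; ring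
  have hKn : 2 * n < K := by
    by_contra hc
    push_neg at hc
    have hc' : (K : ℝ) ≤ 2 * n := by exact_mod_cast hc
    have hn' : (1 : ℝ) ≤ (n : ℝ) := by exact_mod_cast hn1
    rw [← hnR] at hK
    nlinarith
  have hKpos : 0 < K := by omega
  set P : ℕ := K - n with hP
  have hPK : P + n = K := by omega
  have hnP : n < P := by omega
  set Q : ℕ := P - n with hQn
  have hQ2 : Q + 2 * n = K := by omega
  have hQR : (Q : ℝ) = (K : ℝ) - 2 * n := by
    have : ((Q + 2 * n : ℕ) : ℝ) = (K : ℝ) := by exact_mod_cast congrArg (Nat.cast : ℕ → ℝ) hQ2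
    push_cast at this
    linarith
  have hQpos : 0 < Q := by omega
  -- rewrite h through Ee
  have hIcc : Finset.Icc (-(L : ℤ) + 1) ((L : ℤ) - 1) = Finset.Icc (-(n : ℤ)) (n : ℤ) := by
    congr 1 <;> omega
  have hdef' : ∀ x : ℝ, h x = ∑ l ∈ Icc (-(n : ℤ)) n, c l * Ee l x := by
    intro x
    rw [hdef x, hIcc]
    rfl
  -- grid max facts
  have hM0 : 0 ≤ M := by
    have h0 : ‖h (ν₀ + ((0 : ℕ) : ℝ) / (K : ℝ))‖ ≤ M := by
      rw [hMdef]
      exact Finset.le_sup' (fun k : ℕ => ‖h (ν₀ + (k : ℝ) / (K : ℝ))‖)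
        (Finset.mem_range.mpr (Nat.succ_pos K))
    exact le_trans (norm_nonneg _) h0
  have hMk : ∀ k ∈ range K, ‖h (ν₀ + (k : ℝ) / K)‖ ≤ M := by
    intro k hk
    rw [hMdef]
    exact Finset.le_sup' (fun k : ℕ => ‖h (ν₀ + (k : ℝ) / (K : ℝ))‖)
      (Finset.mem_range.mpr (by have := Finset.mem_range.mp hk; omega))
  -- the key identity
  have key : ((Q : ℂ)) * K * h ν
      = ∑ k ∈ range K, h (ν₀ + (k : ℝ) / K) *
          (∑ t ∈ Icc (-(P : ℤ)) P,
            ((max ((P : ℤ) - |t|) 0 - max ((n : ℤ) - |t|) 0 : ℤ) : ℂ) *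
              Ee t (ν - (ν₀ + (k : ℝ) / K))) := by
    have hQC : ((Q : ℂ)) = (P : ℂ) - n := by
      rw [hQn]
      push_cast [hnP.le]
      ring
    rw [hQC, hdef' ν, ← interpolation n P K hPK hnP c ν ν₀]
    exact Finset.sum_congr rfl fun k _ => by rw [hdef' (ν₀ + (k : ℝ) / K)]
  have harg : ∀ k : ℕ, ν - (ν₀ + (k : ℝ) / K) = (ν - ν₀) - (k : ℝ) / K := fun k => by ring
  have habs : (Q : ℝ) * K * ‖h ν‖ ≤ M * ((P : ℝ) * K + (n : ℝ) * K) := by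
    have h1 : ‖(Q : ℂ) * K * h ν‖ = (Q : ℝ) * K * ‖h ν‖ := by
      rw [norm_mul, norm_mul, Complex.norm_natCast, Complex.norm_natCast]
    calc (Q : ℝ) * K * ‖h ν‖
        = ‖∑ k ∈ range K, h (ν₀ + (k : ℝ) / K) *
            (∑ t ∈ Icc (-(P : ℤ)) P,
              ((max ((P : ℤ) - |t|) 0 - max ((n : ℤ) - |t|) 0 : ℤ) : ℂ) *
                Ee t (ν - (ν₀ + (k : ℝ) / K)))‖ := by rw [← h1, key]
      _ ≤ ∑ k ∈ range K, ‖h (ν₀ + (k : ℝ) / K) *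
            (∑ t ∈ Icc (-(P : ℤ)) P,
              ((max ((P : ℤ) - |t|) 0 - max ((n : ℤ) - |t|) 0 : ℤ) : ℂ) *
                Ee t (ν - (ν₀ + (k : ℝ) / K)))‖ := norm_sum_le _ _
      _ ≤ ∑ k ∈ range K, M *
            (Complex.normSq (∑ s ∈ range P, Ee s ((ν - ν₀) - (k : ℝ) / K))
              + Complex.normSq (∑ s ∈ range n, Ee s ((ν - ν₀) - (k : ℝ) / K))) := by
          apply Finset.sum_le_sum
          intro k hk
          rw [norm_mul]
          have hb := V_abs_le n P hnP.le (ν - (ν₀ + (k : ℝ) / K))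
          rw [harg k] at hb
          rw [harg k]
          exact mul_le_mul (hMk k hk) hb (norm_nonneg _)
            (le_trans (norm_nonneg _) (hMk k hk))
      _ = M * ((P : ℝ) * K + (n : ℝ) * K) := by
          rw [← Finset.mul_sum, Finset.sum_add_distrib,
            sampled_fejer_real K hKpos P (by omega) (ν - ν₀),
            sampled_fejer_real K hKpos n (by omega) (ν - ν₀)]
  have hPnK : (P : ℝ) * K + (n : ℝ) * K = (K : ℝ) * K := by
    have : ((P + n : ℕ) : ℝ) = (K : ℝ) := by exact_mod_cast congrArg (Nat.cast : ℕ → ℝ) hPK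
    push_cast at this
    nlinarith [this]
  rw [hPnK] at habs
  have hK' : 2 * (1 + δ) * (n : ℝ) ≤ K := by rw [hnR]; exact hK
  have hKQ : (K : ℝ) ≤ (Q : ℝ) * (1 + 1 / δ) := by
    rw [hQR]
    have key2 : ((K : ℝ) - 2 * n) * (1 + 1 / δ) - K = ((K : ℝ) - 2 * (1 + δ) * n) / δ := by
      field_simp
      ring
    have hnum : (0 : ℝ) ≤ ((K : ℝ) - 2 * (1 + δ) * n) / δ :=
      div_nonneg (by linarith) hδ.le
    linarith [key2 ▸ hnum]
  have hQKpos : (0 : ℝ) < (Q : ℝ) * K := by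
    have hq : (0 : ℝ) < (Q : ℝ) := by exact_mod_cast hQpos
    have hk : (0 : ℝ) < (K : ℝ) := by exact_mod_cast hKpos
    exact mul_pos hq hk
  have hKnn : (0 : ℝ) ≤ (K : ℝ) := by positivity
  apply le_of_mul_le_mul_left _ hQKpos
  calc (Q : ℝ) * K * ‖h ν‖ ≤ M * ((K : ℝ) * K) := habs
    _ ≤ (Q : ℝ) * K * ((1 + 1 / δ) * M) := by
        nlinarith [mul_le_mul_of_nonneg_right hKQ (mul_nonneg hKnn hM0)]
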